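/- arXiv:1006.0302 — 2 statements merged into one kernel-verified Lean document; each statement's English description precedes it below -/
import Mathlib

section
/- F_min fails the triangle inequality for the angle metric: there exist density matrices ρ, σ, τ on ℂ² with arccos F_min(ρ,σ) > arccos F_min(ρ,τ) + arccos F_min(τ,σ). Concretely, for 0 < θ < π/2, take pure states ψ = (cos(θ/2), sin(θ/2)), φ = (cos(θ/2), −sin(θ/2)), and τ = diag(cos(θ/2), sin(θ/2))/(cos(θ/2)+sin(θ/2)); then F_min(ψ,φ)=0 while F_min(ψ,τ)=F_min(φ,τ)=1/(cos(θ/2)+sin(θ/2)), and the inequality holds for small θ. -/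
open Matrix BigOperators
open scoped ComplexOrder Classical

noncomputable def msqrt {n : Type*} [Fintype n] [DecidableEq n]
    (A : Matrix n n ℂ) : Matrix n n ℂ :=
  if h : A.PosSemidef then (h.1.eigenvectorUnitary : Matrix n n ℂ) *
    diagonal ((↑) ∘ Real.sqrt ∘ h.1.eigenvalues) * star (h.1.eigenvectorUnitary : Matrix n n ℂ)
  else 0

noncomputable def gm {n : Type*} [Fintype n] [DecidableEq n]
    (A B : Matrix n n ℂ) : Matrix n n ℂ :=
  msqrt A * msqrt ((msqrt A)⁻¹ * B * (msqrt A)⁻¹) * msqrt A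

def IsDensity {n : Type*} [Fintype n] (ρ : Matrix n n ℂ) : Prop :=
  ρ.PosSemidef ∧ ρ.trace = 1

structure IsReverseTest {d m : ℕ} (ρ σ : Matrix (Fin d) (Fin d) ℂ)
    (R : Fin m → Matrix (Fin d) (Fin d) ℂ) (p q : Fin m → ℝ) : Prop where
  states : ∀ x, IsDensity (R x)
  p_nonneg : ∀ x, 0 ≤ p x
  q_nonneg : ∀ x, 0 ≤ q x
  p_sum : ∑ x, p x = 1
  q_sum : ∑ x, q x = 1
  rho_eq : ∑ x, (p x : ℂ) • R x = ρ
  sigma_eq : ∑ x, (q x : ℂ) • R x = σ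

noncomputable def Fmin {d : ℕ} (ρ σ : Matrix (Fin d) (Fin d) ℂ) : ℝ :=
  sSup {r : ℝ | ∃ (m : ℕ) (R : Fin m → Matrix (Fin d) (Fin d) ℂ) (p q : Fin m → ℝ),
    IsReverseTest ρ σ R p q ∧ r = ∑ x, Real.sqrt (p x * q x)}

noncomputable def Dmax {d : ℕ} (ρ σ : Matrix (Fin d) (Fin d) ℂ) : ℝ :=
  sInf {r : ℝ | ∃ (m : ℕ) (R : Fin m → Matrix (Fin d) (Fin d) ℂ) (p q : Fin m → ℝ),
    IsReverseTest ρ σ R p q ∧ r = (∑ x, |p x - q x|) / 2}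

noncomputable def choiMatrix {d e : ℕ}
    (Λ : Matrix (Fin d) (Fin d) ℂ →ₗ[ℂ] Matrix (Fin e) (Fin e) ℂ) :
    Matrix (Fin d × Fin e) (Fin d × Fin e) ℂ :=
  Matrix.of fun pr qr => Λ (Matrix.single pr.1 qr.1 1) pr.2 qr.2

def IsCPTP {d e : ℕ}
    (Λ : Matrix (Fin d) (Fin d) ℂ →ₗ[ℂ] Matrix (Fin e) (Fin e) ℂ) : Prop :=
  (choiMatrix Λ).PosSemidef ∧ ∀ A, (Λ A).trace = A.trace

noncomputable def mcfc {n : Type*} [Fintype n] [DecidableEq n]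
    (f : ℝ → ℝ) (A : Matrix n n ℂ) : Matrix n n ℂ :=
  if h : A.IsHermitian then h.cfc f else 0

def IsOperatorMonotoneOnNonneg (f : ℝ → ℝ) : Prop :=
  ∀ (d : ℕ) (A B : Matrix (Fin d) (Fin d) ℂ), A.PosSemidef → B.PosSemidef →
    (B - A).PosSemidef → (mcfc f B - mcfc f A).PosSemidef

noncomputable def traceNorm {n : Type*} [Fintype n] [DecidableEq n]
    (A : Matrix n n ℂ) : ℝ :=
  ((msqrt (Aᴴ * A)).trace).re


/-! ### Auxiliary material for `stmt11` -/

noncomputable abbrev Psi11 : Matrix (Fin 2) (Fin 2) ℂ := !![16/25, 12/25; 12/25, 9/25]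
noncomputable abbrev Phi11 : Matrix (Fin 2) (Fin 2) ℂ := !![16/25, -(12/25); -(12/25), 9/25]
noncomputable abbrev Tau11 : Matrix (Fin 2) (Fin 2) ℂ := !![4/7, 0; 0, 3/7]
noncomputable abbrev Mm11 : Matrix (Fin 2) (Fin 2) ℂ := !![1/2, -(1/2); -(1/2), 1/2]
noncomputable abbrev Nn11 : Matrix (Fin 2) (Fin 2) ℂ := !![1/2, 1/2; 1/2, 1/2]

lemma star_rat11 (a b : ℝ) : star ((a:ℂ)/b) = (a:ℂ)/b := by
  rw [show ((a:ℂ)/b) = ((a/b:ℝ):ℂ) by push_cast; ring, Complex.star_def, Complex.conj_ofReal]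

lemma star_rat11' (a b : ℝ) : star (-((a:ℂ)/b)) = -((a:ℂ)/b) := by rw [star_neg, star_rat11]

lemma Psi11_psd : Psi11.PosSemidef := by
  refine Matrix.PosSemidef.of_dotProduct_mulVec_nonneg ?_ ?_
  · ext i j; fin_cases i <;> fin_cases j <;>
      simp [Matrix.conjTranspose_apply, star_rat11 16 25, star_rat11 12 25, star_rat11 9 25]
  · intro x
    have h : star x ⬝ᵥ Psi11 *ᵥ x
        = star ((4/5) * x 0 + (3/5) * x 1) * ((4/5) * x 0 + (3/5) * x 1) := by
      simp [dotProduct, Matrix.mulVec, Fin.sum_univ_two, star_add, star_mul',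
        star_rat11 4 5, star_rat11 3 5]
      ring
    rw [h]; exact star_mul_self_nonneg _

lemma Phi11_psd : Phi11.PosSemidef := by
  refine Matrix.PosSemidef.of_dotProduct_mulVec_nonneg ?_ ?_
  · ext i j; fin_cases i <;> fin_cases j <;>
      simp [Matrix.conjTranspose_apply, star_rat11 16 25, star_rat11' 12 25, star_rat11 9 25]
  · intro x
    have h : star x ⬝ᵥ Phi11 *ᵥ x
        = star ((4/5) * x 0 - (3/5) * x 1) * ((4/5) * x 0 - (3/5) * x 1) := by
      simp [dotProduct, Matrix.mulVec, Fin.sum_univ_two, star_add, star_sub, star_mul',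
        star_rat11 4 5, star_rat11 3 5]
      ring
    rw [h]; exact star_mul_self_nonneg _

lemma Tau11_psd : Tau11.PosSemidef := by
  refine Matrix.PosSemidef.of_dotProduct_mulVec_nonneg ?_ ?_
  · ext i j; fin_cases i <;> fin_cases j <;>
      simp [Matrix.conjTranspose_apply, star_rat11 4 7, star_rat11 3 7]
  · intro x
    have h : star x ⬝ᵥ Tau11 *ᵥ x
        = (4/7) * (star (x 0) * x 0) + (3/7) * (star (x 1) * x 1) := by
      simp [dotProduct, Matrix.mulVec, Fin.sum_univ_two]
      ring
    rw [h]
    have c47 : (0:ℂ) ≤ 4/7 := by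
      rw [Complex.le_def]; constructor <;> norm_num
    have c37 : (0:ℂ) ≤ 3/7 := by
      rw [Complex.le_def]; constructor <;> norm_num
    exact add_nonneg (mul_nonneg c47 (star_mul_self_nonneg _))
      (mul_nonneg c37 (star_mul_self_nonneg _))

lemma Mm11_psd : Mm11.PosSemidef := by
  refine Matrix.PosSemidef.of_dotProduct_mulVec_nonneg ?_ ?_
  · ext i j; fin_cases i <;> fin_cases j <;>
      simp [Matrix.conjTranspose_apply, star_rat11 1 2, star_rat11' 1 2]
  · intro x
    have h : star x ⬝ᵥ Mm11 *ᵥ x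
        = star ((x 0 - x 1)/2) * ((x 0 - x 1)/2) + star ((x 0 - x 1)/2) * ((x 0 - x 1)/2) := by
      simp [dotProduct, Matrix.mulVec, Fin.sum_univ_two, star_sub, star_div₀]
      ring_nf
    rw [h]; exact add_nonneg (star_mul_self_nonneg _) (star_mul_self_nonneg _)

lemma Nn11_psd : Nn11.PosSemidef := by
  refine Matrix.PosSemidef.of_dotProduct_mulVec_nonneg ?_ ?_
  · ext i j; fin_cases i <;> fin_cases j <;>
      simp [Matrix.conjTranspose_apply, star_rat11 1 2]
  · intro x
    have h : star x ⬝ᵥ Nn11 *ᵥ x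
        = star ((x 0 + x 1)/2) * ((x 0 + x 1)/2) + star ((x 0 + x 1)/2) * ((x 0 + x 1)/2) := by
      simp [dotProduct, Matrix.mulVec, Fin.sum_univ_two, star_add, star_div₀]
      ring_nf
    rw [h]; exact add_nonneg (star_mul_self_nonneg _) (star_mul_self_nonneg _)

lemma Psi11_density : IsDensity Psi11 := ⟨Psi11_psd, by rw [Matrix.trace_fin_two]; norm_num⟩
lemma Phi11_density : IsDensity Phi11 := ⟨Phi11_psd, by rw [Matrix.trace_fin_two]; norm_num⟩
lemma Tau11_density : IsDensity Tau11 := ⟨Tau11_psd, by rw [Matrix.trace_fin_two]; norm_num⟩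
lemma Mm11_density : IsDensity Mm11 := ⟨Mm11_psd, by rw [Matrix.trace_fin_two]; norm_num⟩
lemma Nn11_density : IsDensity Nn11 := ⟨Nn11_psd, by rw [Matrix.trace_fin_two]; norm_num⟩

lemma dens_ker_psi (R : Matrix (Fin 2) (Fin 2) ℂ) (hR : IsDensity R)
    (hker : R *ᵥ ![3, -4] = 0) : R = Psi11 := by
  have h0 := congrFun hker 0
  have h1 := congrFun hker 1
  simp [Matrix.mulVec, dotProduct, Fin.sum_univ_two] at h0 h1
  have herm10 : star (R 0 1) = R 1 0 := hR.1.1.apply 1 0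
  have herm00 : star (R 0 0) = R 0 0 := hR.1.1.apply 0 0
  have htr : R 0 0 + R 1 1 = 1 := by
    have := hR.2; rwa [Matrix.trace_fin_two] at this
  have hb : R 0 1 = 3/4 * R 0 0 := by linear_combination (-1/4 : ℂ) * h0
  have hc : R 1 0 = 3/4 * R 0 0 := by
    have hs := congrArg star hb
    rw [herm10] at hs
    rw [hs, star_mul', herm00]
    simp [Complex.star_def, map_div₀]
  have hd : R 1 1 = 9/16 * R 0 0 := by linear_combination (-1/4 : ℂ) * h1 + (3/4:ℂ) * hc
  have ha : R 0 0 = 16/25 := by linear_combination (16/25:ℂ) * htr - (16/25:ℂ) * hd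
  ext i j
  fin_cases i <;> fin_cases j <;>
    simp [ha, hb, hc, hd] <;> norm_num

lemma dens_ker_phi (R : Matrix (Fin 2) (Fin 2) ℂ) (hR : IsDensity R)
    (hker : R *ᵥ ![3, 4] = 0) : R = Phi11 := by
  have h0 := congrFun hker 0
  have h1 := congrFun hker 1
  simp [Matrix.mulVec, dotProduct, Fin.sum_univ_two] at h0 h1
  have herm10 : star (R 0 1) = R 1 0 := hR.1.1.apply 1 0
  have herm00 : star (R 0 0) = R 0 0 := hR.1.1.apply 0 0
  have htr : R 0 0 + R 1 1 = 1 := by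
    have := hR.2; rwa [Matrix.trace_fin_two] at this
  have hb : R 0 1 = -(3/4) * R 0 0 := by linear_combination (1/4 : ℂ) * h0
  have hc : R 1 0 = -(3/4) * R 0 0 := by
    have hs := congrArg star hb
    rw [herm10] at hs
    rw [hs, star_mul', herm00, star_neg]
    simp [Complex.star_def, map_div₀]
  have hd : R 1 1 = 9/16 * R 0 0 := by linear_combination (1/4 : ℂ) * h1 + (-3/4:ℂ) * hc
  have ha : R 0 0 = 16/25 := by linear_combination (16/25:ℂ) * htr - (16/25:ℂ) * hd
  ext i j
  fin_cases i <;> fin_cases j <;>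
    simp [ha, hb, hc, hd] <;> norm_num

lemma comp_ker11 {m : ℕ} (R : Fin m → Matrix (Fin 2) (Fin 2) ℂ) (p : Fin m → ℝ)
    (hR : ∀ x, IsDensity (R x)) (hp : ∀ x, 0 ≤ p x)
    (A : Matrix (Fin 2) (Fin 2) ℂ) (hsum : ∑ x, (p x : ℂ) • R x = A)
    (w : Fin 2 → ℂ) (hw : star w ⬝ᵥ A *ᵥ w = 0)
    (x : Fin m) (hx : p x ≠ 0) : R x *ᵥ w = 0 := by
  have hsum' : ∑ y, (p y : ℂ) * (star w ⬝ᵥ R y *ᵥ w) = 0 := by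
    rw [← hw, ← hsum]
    have expand : ∀ (B : Matrix (Fin 2) (Fin 2) ℂ),
        star w ⬝ᵥ B *ᵥ w = ∑ i, ∑ j, star (w i) * B i j * w j := by
      intro B
      simp [dotProduct, Matrix.mulVec, Finset.mul_sum, mul_assoc]
      ring
    simp only [expand, Finset.mul_sum, Matrix.sum_apply, Matrix.smul_apply, smul_eq_mul,
      Finset.sum_mul]
    rw [Finset.sum_comm]
    refine Finset.sum_congr rfl fun i _ => ?_
    rw [Finset.sum_comm]
    refine Finset.sum_congr rfl fun j _ => ?_
    refine Finset.sum_congr rfl fun y _ => ?_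
    ring
  have hterm : ∀ y ∈ Finset.univ, (0:ℂ) ≤ (p y : ℂ) * (star w ⬝ᵥ R y *ᵥ w) := by
    intro y _
    refine mul_nonneg ?_ ((hR y).1.dotProduct_mulVec_nonneg w)
    exact_mod_cast (Complex.zero_le_real).2 (hp y)
  have hz := (Finset.sum_eq_zero_iff_of_nonneg hterm).1 hsum' x (Finset.mem_univ x)
  have hq : star w ⬝ᵥ R x *ᵥ w = 0 := by
    rcases mul_eq_zero.mp hz with h | h
    · exact absurd (by exact_mod_cast h) hx
    · exact h
  exact ((hR x).1.dotProduct_mulVec_zero_iff w).1 hq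

lemma S_bdd11 {d : ℕ} (ρ σ : Matrix (Fin d) (Fin d) ℂ) :
    BddAbove {r : ℝ | ∃ (m : ℕ) (R : Fin m → Matrix (Fin d) (Fin d) ℂ) (p q : Fin m → ℝ),
      IsReverseTest ρ σ R p q ∧ r = ∑ x, Real.sqrt (p x * q x)} := by
  refine ⟨1, ?_⟩
  rintro r ⟨m, R, p, q, h, rfl⟩
  calc ∑ x, Real.sqrt (p x * q x) ≤ ∑ x, (p x + q x)/2 := by
        refine Finset.sum_le_sum fun x _ => ?_
        have ha := h.p_nonneg x; have hb := h.q_nonneg x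
        rw [Real.sqrt_mul ha]
        nlinarith [Real.sq_sqrt ha, Real.sq_sqrt hb,
          sq_nonneg (Real.sqrt (p x) - Real.sqrt (q x)),
          Real.sqrt_nonneg (p x), Real.sqrt_nonneg (q x)]
    _ = 1 := by
        rw [← Finset.sum_div, Finset.sum_add_distrib, h.p_sum, h.q_sum]; norm_num

lemma testA11 : IsReverseTest Psi11 Tau11 ![Psi11, Mm11] ![1, 0] ![25/49, 24/49] where
  states := by
    intro x; fin_cases x
    · exact Psi11_density
    · exact Mm11_density
  p_nonneg := by intro x; fin_cases x <;> norm_num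
  q_nonneg := by intro x; fin_cases x <;> norm_num
  p_sum := by rw [Fin.sum_univ_two]; norm_num
  q_sum := by rw [Fin.sum_univ_two]; norm_num
  rho_eq := by
    rw [Fin.sum_univ_two]
    ext i j; fin_cases i <;> fin_cases j <;> simp
  sigma_eq := by
    rw [Fin.sum_univ_two]
    ext i j; fin_cases i <;> fin_cases j <;> simp <;> push_cast <;> norm_num

lemma testB11 : IsReverseTest Tau11 Phi11 ![Phi11, Nn11] ![25/49, 24/49] ![1, 0] where
  states := by
    intro x; fin_cases x
    · exact Phi11_density
    · exact Nn11_density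
  p_nonneg := by intro x; fin_cases x <;> norm_num
  q_nonneg := by intro x; fin_cases x <;> norm_num
  p_sum := by rw [Fin.sum_univ_two]; norm_num
  q_sum := by rw [Fin.sum_univ_two]; norm_num
  rho_eq := by
    rw [Fin.sum_univ_two]
    ext i j; fin_cases i <;> fin_cases j <;> simp <;> push_cast <;> norm_num
  sigma_eq := by
    rw [Fin.sum_univ_two]
    ext i j; fin_cases i <;> fin_cases j <;> simp

lemma testC11 : IsReverseTest Psi11 Phi11 ![Psi11, Phi11] ![1, 0] ![0, 1] where
  states := by
    intro x; fin_cases x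
    · exact Psi11_density
    · exact Phi11_density
  p_nonneg := by intro x; fin_cases x <;> norm_num
  q_nonneg := by intro x; fin_cases x <;> norm_num
  p_sum := by rw [Fin.sum_univ_two]; norm_num
  q_sum := by rw [Fin.sum_univ_two]; norm_num
  rho_eq := by
    rw [Fin.sum_univ_two]
    ext i j; fin_cases i <;> fin_cases j <;> simp
  sigma_eq := by
    rw [Fin.sum_univ_two]
    ext i j; fin_cases i <;> fin_cases j <;> simp

lemma sqrt2549 : Real.sqrt (25/49) = 5/7 := by
  rw [show (25/49:ℝ) = (5/7)^2 by norm_num, Real.sqrt_sq (by norm_num)]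

lemma Fmin_psi_tau : (5/7 : ℝ) ≤ Fmin Psi11 Tau11 := by
  refine le_csSup (S_bdd11 _ _) ?_
  refine ⟨2, ![Psi11, Mm11], ![1, 0], ![25/49, 24/49], testA11, ?_⟩
  rw [Fin.sum_univ_two]
  simp
  rw [show (25:ℝ) = 5^2 by norm_num, show (49:ℝ) = 7^2 by norm_num,
    Real.sqrt_sq (by norm_num), Real.sqrt_sq (by norm_num)]

lemma Fmin_tau_phi : (5/7 : ℝ) ≤ Fmin Tau11 Phi11 := by
  refine le_csSup (S_bdd11 _ _) ?_
  refine ⟨2, ![Phi11, Nn11], ![25/49, 24/49], ![1, 0], testB11, ?_⟩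
  rw [Fin.sum_univ_two]
  simp
  rw [show (25:ℝ) = 5^2 by norm_num, show (49:ℝ) = 7^2 by norm_num,
    Real.sqrt_sq (by norm_num), Real.sqrt_sq (by norm_num)]

lemma Fmin_psi_phi : Fmin Psi11 Phi11 = 0 := by
  have mem0 : (0:ℝ) ∈ {r : ℝ | ∃ (m : ℕ) (R : Fin m → Matrix (Fin 2) (Fin 2) ℂ)
      (p q : Fin m → ℝ), IsReverseTest Psi11 Phi11 R p q ∧ r = ∑ x, Real.sqrt (p x * q x)} := by
    refine ⟨2, ![Psi11, Phi11], ![1, 0], ![0, 1], testC11, ?_⟩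
    rw [Fin.sum_univ_two]
    simp
  have hPsiKer : star ![(3:ℂ), -4] ⬝ᵥ Psi11 *ᵥ ![(3:ℂ), -4] = 0 := by
    have : Psi11 *ᵥ ![(3:ℂ), -4] = 0 := by
      funext i; fin_cases i <;>
        simp [Matrix.mulVec, dotProduct, Fin.sum_univ_two] <;> norm_num
    rw [this, dotProduct_zero]
  have hPhiKer : star ![(3:ℂ), 4] ⬝ᵥ Phi11 *ᵥ ![(3:ℂ), 4] = 0 := by
    have : Phi11 *ᵥ ![(3:ℂ), 4] = 0 := by
      funext i; fin_cases i <;>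
        simp [Matrix.mulVec, dotProduct, Fin.sum_univ_two] <;> norm_num
    rw [this, dotProduct_zero]
  refine le_antisymm (csSup_le ⟨0, mem0⟩ ?_) (le_csSup (S_bdd11 _ _) mem0)
  rintro r ⟨m, R, p, q, h, rfl⟩
  refine le_of_eq (Finset.sum_eq_zero fun x _ => ?_)
  rcases eq_or_lt_of_le (h.p_nonneg x) with hp | hp
  · rw [← hp, zero_mul, Real.sqrt_zero]
  rcases eq_or_lt_of_le (h.q_nonneg x) with hq | hq
  · rw [← hq, mul_zero, Real.sqrt_zero]
  exfalso
  have e1 : R x = Psi11 := dens_ker_psi _ (h.states x)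
    (comp_ker11 R p h.states h.p_nonneg _ h.rho_eq _ hPsiKer x hp.ne')
  have e2 : R x = Phi11 := dens_ker_phi _ (h.states x)
    (comp_ker11 R q h.states h.q_nonneg _ h.sigma_eq _ hPhiKer x hq.ne')
  have : Psi11 = Phi11 := e1 ▸ e2
  have h01 := congrFun (congrFun this 0) 1
  simp at h01
  norm_num at h01

lemma arccos_antitone11 : ∀ x y : ℝ, x ≤ y → Real.arccos y ≤ Real.arccos x := by
  intro x y hxy
  rw [Real.arccos_eq_pi_div_two_sub_arcsin, Real.arccos_eq_pi_div_two_sub_arcsin]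
  have := Real.monotone_arcsin hxy
  linarith

lemma sqrt2_lt : Real.sqrt 2 / 2 < 5/7 := by
  nlinarith [Real.sq_sqrt (by norm_num : (0:ℝ) ≤ 2), Real.sqrt_nonneg 2]

lemma arccos57 : Real.arccos (5/7) < Real.pi / 4 := by
  have h4 : Real.arccos (Real.sqrt 2 / 2) = Real.pi / 4 := by
    rw [← Real.cos_pi_div_four]
    exact Real.arccos_cos (by positivity) (by linarith [Real.pi_pos])
  have hmem1 : Real.sqrt 2 / 2 ∈ Set.Icc (-1:ℝ) 1 := by
    constructor
    · nlinarith [Real.sqrt_nonneg 2]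
    · nlinarith [Real.sq_sqrt (by norm_num : (0:ℝ) ≤ 2), Real.sqrt_nonneg 2]
  have hmem2 : (5/7:ℝ) ∈ Set.Icc (-1:ℝ) 1 := by norm_num
  have := Real.strictAntiOn_arccos hmem1 hmem2 sqrt2_lt
  linarith [this, h4.symm.le]


theorem stmt11 : ∃ ρ σ τ : Matrix (Fin 2) (Fin 2) ℂ,
    IsDensity ρ ∧ IsDensity σ ∧ IsDensity τ ∧
    Real.arccos (Fmin ρ τ) + Real.arccos (Fmin τ σ) < Real.arccos (Fmin ρ σ) := by
  refine ⟨Psi11, Phi11, Tau11, Psi11_density, Phi11_density, Tau11_density, ?_⟩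
  rw [Fmin_psi_phi, Real.arccos_zero]
  have h1 : Real.arccos (Fmin Psi11 Tau11) ≤ Real.arccos (5/7) :=
    arccos_antitone11 _ _ Fmin_psi_tau
  have h2 : Real.arccos (Fmin Tau11 Phi11) ≤ Real.arccos (5/7) :=
    arccos_antitone11 _ _ Fmin_tau_phi
  have h3 := arccos57
  linarith
end

section
/- Δ_max fails the triangle inequality: there exist density matrices ρ, σ, τ on ℂ² with Δ_max(ρ,σ) > Δ_max(ρ,τ) + Δ_max(τ,σ). Concretely, for non-parallel pure states Δ_max = 1, while for θ close to 0, Δ_max(ψ,τ) + Δ_max(φ,τ) ≤ 2√(1 − 1/(cos(θ/2)+sin(θ/2))²) < 1 with ψ, φ, τ as in the F_min counterexample. -/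
open Matrix BigOperators
open scoped ComplexOrder Classical

lemma psd_det_nonneg {A : Matrix (Fin 2) (Fin 2) ℂ} (h : A.PosSemidef) : 0 ≤ A.det := by
  rw [h.isHermitian.det_eq_prod_eigenvalues]
  exact Finset.prod_nonneg fun i _ => RCLike.ofReal_nonneg.mpr (h.eigenvalues_nonneg i)

lemma dens_entries {A : Matrix (Fin 2) (Fin 2) ℂ} (h : IsDensity A) :
    0 ≤ (A 0 0).re ∧ 0 ≤ (A 1 1).re ∧ (A 0 0).re + (A 1 1).re = 1 ∧
    (A 1 0).re = (A 0 1).re ∧ (A 0 1).re^2 ≤ (A 0 0).re * (A 1 1).re := by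
  have hH : Aᴴ = A := h.1.1
  have h10 : A 1 0 = star (A 0 1) := by
    conv_lhs => rw [← hH, Matrix.conjTranspose_apply]
  have h00im : (A 0 0).im = 0 := by
    have : star (A 0 0) = A 0 0 := by conv_rhs => rw [← hH, Matrix.conjTranspose_apply]
    exact Complex.conj_eq_iff_im.mp this
  have h11im : (A 1 1).im = 0 := by
    have : star (A 1 1) = A 1 1 := by conv_rhs => rw [← hH, Matrix.conjTranspose_apply]
    exact Complex.conj_eq_iff_im.mp this
  have h00 : 0 ≤ (A 0 0).re := by
    have := h.1.re_dotProduct_nonneg ![1,0]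
    simpa [dotProduct, Matrix.mulVec, Fin.sum_univ_two, Pi.star_apply] using this
  have h11 : 0 ≤ (A 1 1).re := by
    have := h.1.re_dotProduct_nonneg ![0,1]
    simpa [dotProduct, Matrix.mulVec, Fin.sum_univ_two, Pi.star_apply] using this
  have htr : (A 0 0).re + (A 1 1).re = 1 := by
    have := congrArg Complex.re h.2
    simpa [Matrix.trace, Fin.sum_univ_two, Matrix.diag] using this
  have hdet := psd_det_nonneg h.1
  rw [Matrix.det_fin_two] at hdet
  have hdre : 0 ≤ (A 0 0 * A 1 1 - A 0 1 * A 1 0).re := (Complex.le_def.mp hdet).1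
  rw [h10] at hdre
  simp only [Complex.sub_re, Complex.mul_re, h00im, h11im, Complex.star_def,
    Complex.conj_re, Complex.conj_im] at hdre
  refine ⟨h00, h11, htr, ?_, ?_⟩
  · rw [h10]; simp
  · nlinarith [sq_nonneg (A 0 1).im]

noncomputable def Ff (s : ℝ) (A : Matrix (Fin 2) (Fin 2) ℂ) : ℝ :=
  4*(A 0 0).re + s*(A 0 1).re + s*(A 1 0).re + (A 1 1).re

lemma keyIneq {a d b : ℝ} (ha : 0 ≤ a) (hd : 0 ≤ d) (hs : a + d = 1) (hb : b^2 ≤ a*d) :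
    4*a + 4*b + d ≤ 5 := by
  nlinarith [sq_nonneg (5*a-4), sq_nonneg (4 - 3*a + 4*b), sq_nonneg b]

lemma Ff_le {s : ℝ} (hs : s = 2 ∨ s = -2) {A : Matrix (Fin 2) (Fin 2) ℂ}
    (hA : IsDensity A) : Ff s A ≤ 5 := by
  obtain ⟨h00, h11, htr, h10, hdet⟩ := dens_entries hA
  rcases hs with rfl | rfl
  · have := keyIneq h00 h11 htr hdet
    simp only [Ff]; linarith
  · have hb : (-(A 0 1).re)^2 ≤ (A 0 0).re * (A 1 1).re := by nlinarith
    have := keyIneq h00 h11 htr hb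
    simp only [Ff]; linarith

lemma not_both {A : Matrix (Fin 2) (Fin 2) ℂ} (hA : IsDensity A)
    (h2 : Ff 2 A = 5) (h2' : Ff (-2) A = 5) : False := by
  obtain ⟨h00, h11, htr, h10, hdet⟩ := dens_entries hA
  simp only [Ff] at h2 h2'
  nlinarith

lemma Ff_sum {m : ℕ} {R : Fin m → Matrix (Fin 2) (Fin 2) ℂ} {p : Fin m → ℝ}
    {M : Matrix (Fin 2) (Fin 2) ℂ} (heq : ∑ x, (p x : ℂ) • R x = M) (s : ℝ) :
    ∑ x, p x * Ff s (R x) = Ff s M := by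
  have entry : ∀ i j, (M i j).re = ∑ x, p x * (R x i j).re := by
    intro i j
    have h1 : M i j = ∑ x, (p x : ℂ) * (R x i j) := by
      rw [← heq]; simp [Matrix.sum_apply]
    rw [h1, Complex.re_sum]
    exact Finset.sum_congr rfl fun x _ => Complex.re_ofReal_mul _ _
  simp only [Ff, entry, Finset.mul_sum]
  rw [← Finset.sum_add_distrib, ← Finset.sum_add_distrib, ← Finset.sum_add_distrib]
  exact Finset.sum_congr rfl fun x _ => by ring


noncomputable def mat2 (a b d : ℝ) : Matrix (Fin 2) (Fin 2) ℂ := !![(a:ℂ), (b:ℂ); (b:ℂ), (d:ℂ)]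

lemma psd2 {a b d : ℝ} (ha : 0 ≤ a) (hd : 0 ≤ d) (hb : b^2 ≤ a*d) :
    (mat2 a b d).PosSemidef := by
  rw [Matrix.posSemidef_iff_dotProduct_mulVec]
  constructor
  · ext i j
    fin_cases i <;> fin_cases j <;> simp [mat2, Matrix.conjTranspose_apply]
  · intro x
    have hx : star x ⬝ᵥ (mat2 a b d).mulVec x =
        (starRingEnd ℂ) (x 0) * (a * x 0 + b * x 1) +
        (starRingEnd ℂ) (x 1) * (b * x 0 + d * x 1) := by
      simp [mat2, dotProduct, Matrix.mulVec, Fin.sum_univ_two, Pi.star_apply]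
      try ring
    rw [hx]
    rw [Complex.le_def]
    obtain ⟨u, v⟩ := x 0
    obtain ⟨s, t⟩ := x 1
    constructor
    · simp [Complex.add_re, Complex.mul_re, Complex.ofReal_re, Complex.ofReal_im]
      rcases ha.eq_or_lt with h0 | h0
      · have hb0 : b = 0 := by nlinarith [sq_nonneg b]
        subst hb0
        simp [← h0]
        nlinarith [sq_nonneg s, sq_nonneg t]
      · nlinarith [sq_nonneg (a*u + b*s), sq_nonneg (a*v + b*t), sq_nonneg u, sq_nonneg v,
          mul_nonneg (mul_nonneg ha hd) (sq_nonneg s), mul_nonneg (mul_nonneg ha hd) (sq_nonneg t),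
          mul_nonneg hd (sq_nonneg s), mul_nonneg hd (sq_nonneg t)]
    · simp [Complex.add_im, Complex.mul_im, Complex.ofReal_re, Complex.ofReal_im]
      ring

lemma dens2 {a b d : ℝ} (ha : 0 ≤ a) (hd : 0 ≤ d) (hb : b^2 ≤ a*d) (hs : a + d = 1) :
    IsDensity (mat2 a b d) := by
  refine ⟨psd2 ha hd hb, ?_⟩
  simp [Matrix.trace, mat2, Fin.sum_univ_two, Matrix.diag]
  exact_mod_cast hs


theorem stmt18 : ∃ ρ σ τ : Matrix (Fin 2) (Fin 2) ℂ,
    IsDensity ρ ∧ IsDensity σ ∧ IsDensity τ ∧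
    Dmax ρ τ + Dmax τ σ < Dmax ρ σ := by
  set ρ := mat2 (4/5) (2/5) (1/5) with hρdef
  set σ := mat2 (4/5) (-2/5) (1/5) with hσdef
  set τ := mat2 (2/3) 0 (1/3) with hτdef
  set χ₁ := mat2 (1/2) (-1/2) (1/2) with hχ₁def
  set χ₂ := mat2 (1/2) (1/2) (1/2) with hχ₂def
  have hρ : IsDensity ρ := dens2 (by norm_num) (by norm_num) (by norm_num) (by norm_num)
  have hσ : IsDensity σ := dens2 (by norm_num) (by norm_num) (by norm_num) (by norm_num)
  have hτ : IsDensity τ := dens2 (by norm_num) (by norm_num) (by norm_num) (by norm_num)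
  have hχ₁ : IsDensity χ₁ := dens2 (by norm_num) (by norm_num) (by norm_num) (by norm_num)
  have hχ₂ : IsDensity χ₂ := dens2 (by norm_num) (by norm_num) (by norm_num) (by norm_num)
  have bdd : ∀ (A B : Matrix (Fin 2) (Fin 2) ℂ), BddBelow {r : ℝ |
      ∃ (m : ℕ) (R : Fin m → Matrix (Fin 2) (Fin 2) ℂ) (p q : Fin m → ℝ),
      IsReverseTest A B R p q ∧ r = (∑ x, |p x - q x|) / 2} := by
    intro A B
    refine ⟨0, ?_⟩
    rintro r ⟨m, R, p, q, _, rfl⟩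
    positivity
  -- membership for Dmax ρ τ
  have Mρτ : (4/9 : ℝ) ∈ {r : ℝ |
      ∃ (m : ℕ) (R : Fin m → Matrix (Fin 2) (Fin 2) ℂ) (p q : Fin m → ℝ),
      IsReverseTest ρ τ R p q ∧ r = (∑ x, |p x - q x|) / 2} := by
    refine ⟨2, ![ρ, χ₁], ![1, 0], ![5/9, 4/9], ⟨?_, ?_, ?_, ?_, ?_, ?_, ?_⟩, ?_⟩
    · intro x; fin_cases x; exacts [hρ, hχ₁]
    · intro x; fin_cases x <;> norm_num
    · intro x; fin_cases x <;> norm_num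
    · rw [Fin.sum_univ_two]; norm_num
    · rw [Fin.sum_univ_two]; norm_num
    · rw [Fin.sum_univ_two]; simp
    · rw [Fin.sum_univ_two]
      ext i j
      fin_cases i <;> fin_cases j <;>
        simp [hρdef, hτdef, hχ₁def, mat2, Matrix.smul_apply] <;> push_cast <;> norm_num
    · rw [Fin.sum_univ_two]
      simp only [Matrix.cons_val_zero, Matrix.cons_val_one, Matrix.head_cons]
      rw [show |(1:ℝ) - 5/9| = 4/9 by rw [abs_of_nonneg] <;> norm_num,
        show |(0:ℝ) - 4/9| = 4/9 by rw [abs_of_nonpos] <;> norm_num]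
      norm_num
  have Mτσ : (4/9 : ℝ) ∈ {r : ℝ |
      ∃ (m : ℕ) (R : Fin m → Matrix (Fin 2) (Fin 2) ℂ) (p q : Fin m → ℝ),
      IsReverseTest τ σ R p q ∧ r = (∑ x, |p x - q x|) / 2} := by
    refine ⟨2, ![σ, χ₂], ![5/9, 4/9], ![1, 0], ⟨?_, ?_, ?_, ?_, ?_, ?_, ?_⟩, ?_⟩
    · intro x; fin_cases x; exacts [hσ, hχ₂]
    · intro x; fin_cases x <;> norm_num
    · intro x; fin_cases x <;> norm_num
    · rw [Fin.sum_univ_two]; norm_num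
    · rw [Fin.sum_univ_two]; norm_num
    · rw [Fin.sum_univ_two]
      ext i j
      fin_cases i <;> fin_cases j <;>
        simp [hσdef, hτdef, hχ₂def, mat2, Matrix.smul_apply] <;> push_cast <;> norm_num
    · rw [Fin.sum_univ_two]; simp
    · rw [Fin.sum_univ_two]
      simp only [Matrix.cons_val_zero, Matrix.cons_val_one, Matrix.head_cons]
      rw [show |(5/9:ℝ) - 1| = 4/9 by rw [abs_of_nonpos] <;> norm_num,
        show |(4/9:ℝ) - 0| = 4/9 by rw [abs_of_nonneg] <;> norm_num]
      norm_num
  have h1 : Dmax ρ τ ≤ 4/9 := csInf_le (bdd ρ τ) Mρτ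
  have h2 : Dmax τ σ ≤ 4/9 := csInf_le (bdd τ σ) Mτσ
  have hlow : (1 : ℝ) ≤ Dmax ρ σ := by
    apply le_csInf
    · refine ⟨1, 2, ![ρ, σ], ![1, 0], ![0, 1], ⟨?_, ?_, ?_, ?_, ?_, ?_, ?_⟩, ?_⟩
      · intro x; fin_cases x; exacts [hρ, hσ]
      · intro x; fin_cases x <;> norm_num
      · intro x; fin_cases x <;> norm_num
      · rw [Fin.sum_univ_two]; norm_num
      · rw [Fin.sum_univ_two]; norm_num
      · rw [Fin.sum_univ_two]; simp
      · rw [Fin.sum_univ_two]; simp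
      · rw [Fin.sum_univ_two]; simp
    · rintro r ⟨m, R, p, q, hRT, rfl⟩
      have hFρ : Ff 2 ρ = 5 := by simp [Ff, hρdef, mat2]; norm_num
      have hGσ : Ff (-2) σ = 5 := by simp [Ff, hσdef, mat2]; norm_num
      have hFs := Ff_sum hRT.rho_eq 2
      have hGs := Ff_sum hRT.sigma_eq (-2)
      have hp0 : ∀ x ∈ Finset.univ, p x * (5 - Ff 2 (R x)) = 0 := by
        apply (Finset.sum_eq_zero_iff_of_nonneg
          (fun x _ => mul_nonneg (hRT.p_nonneg x)
            (by linarith [Ff_le (Or.inl rfl) (hRT.states x)]))).mp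
        have e : ∑ x, p x * (5 - Ff 2 (R x))
            = 5 * (∑ x, p x) - ∑ x, p x * Ff 2 (R x) := by
          rw [Finset.mul_sum, ← Finset.sum_sub_distrib]
          exact Finset.sum_congr rfl fun x _ => by ring
        rw [e, hRT.p_sum, hFs, hFρ]; norm_num
      have hq0 : ∀ x ∈ Finset.univ, q x * (5 - Ff (-2) (R x)) = 0 := by
        apply (Finset.sum_eq_zero_iff_of_nonneg
          (fun x _ => mul_nonneg (hRT.q_nonneg x)
            (by linarith [Ff_le (Or.inr rfl) (hRT.states x)]))).mp
        have e : ∑ x, q x * (5 - Ff (-2) (R x))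
            = 5 * (∑ x, q x) - ∑ x, q x * Ff (-2) (R x) := by
          rw [Finset.mul_sum, ← Finset.sum_sub_distrib]
          exact Finset.sum_congr rfl fun x _ => by ring
        rw [e, hRT.q_sum, hGs, hGσ]; norm_num
      have habs : ∀ x, |p x - q x| = p x + q x := by
        intro x
        by_cases hp : p x = 0
        · rw [hp, zero_sub, abs_neg, abs_of_nonneg (hRT.q_nonneg x), zero_add]
        by_cases hq : q x = 0
        · rw [hq, sub_zero, abs_of_nonneg (hRT.p_nonneg x), add_zero]
        exfalso
        have hF5 : Ff 2 (R x) = 5 := by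
          have := hp0 x (Finset.mem_univ x)
          rcases mul_eq_zero.mp this with h | h
          · exact absurd h hp
          · linarith
        have hG5 : Ff (-2) (R x) = 5 := by
          have := hq0 x (Finset.mem_univ x)
          rcases mul_eq_zero.mp this with h | h
          · exact absurd h hq
          · linarith
        exact not_both (hRT.states x) hF5 hG5
      have : ∑ x, |p x - q x| = 2 := by
        rw [Finset.sum_congr rfl fun x _ => habs x, Finset.sum_add_distrib,
          hRT.p_sum, hRT.q_sum]
        norm_num
      rw [this]; norm_num
  exact ⟨ρ, σ, τ, hρ, hσ, hτ, by linarith⟩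
end
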